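/- arXiv:2111.06724 — 2 statements merged into one kernel-verified Lean document; each statement's English description precedes it below -/
import Mathlib

section
/- Let F be a self-similar set satisfying the strong separation condition, i.e. the attractor of a finite system of contracting similarities f₁, …, f_m on ℝ^p whose images f_i(F) are pairwise disjoint. Then for every 0 < α < 1 there is a dense Gδ subset 𝒢 of C₁^α(F) on which λ(f(F)) = 0 for every f ∈ 𝒢, and D_*(α, F) = 0. -/
open MeasureTheory
open scoped NNReal ENNReal

noncomputable section
set_option linter.unusedSectionVars false
set_option linter.unusedVariables false
set_option maxHeartbeats 1000000
set_option synthInstance.maxHeartbeats 1000000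

lemma add_rpow_le {a b α : ℝ} (ha : 0 ≤ a) (hb : 0 ≤ b) (h0 : 0 ≤ α) (h1 : α ≤ 1) :
    (a + b) ^ α ≤ a ^ α + b ^ α := by
  have h := NNReal.rpow_add_le_add_rpow a.toNNReal b.toNNReal h0 h1
  have hab : ((a.toNNReal + b.toNNReal : ℝ≥0) : ℝ) = a + b := by
    simp [Real.coe_toNNReal _ ha, Real.coe_toNNReal _ hb]
  calc (a + b) ^ α = (((a.toNNReal + b.toNNReal : ℝ≥0) : ℝ)) ^ α := by rw [hab]
    _ = (((a.toNNReal + b.toNNReal : ℝ≥0) ^ α : ℝ≥0) : ℝ) := by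
        rw [NNReal.coe_rpow]
    _ ≤ ((a.toNNReal ^ α + b.toNNReal ^ α : ℝ≥0) : ℝ) := by exact_mod_cast h
    _ = a ^ α + b ^ α := by
        push_cast [NNReal.coe_rpow, Real.coe_toNNReal _ ha, Real.coe_toNNReal _ hb]
        ring

lemma pow_rpow_comm {x : ℝ} (hx : 0 ≤ x) (n : ℕ) (α : ℝ) :
    (x ^ n) ^ α = (x ^ α) ^ n := by
  rw [← Real.rpow_natCast x n, ← Real.rpow_mul hx, mul_comm, Real.rpow_mul hx,
    Real.rpow_natCast]

lemma geom_sum_Icc_le {t : ℝ} (h0 : 0 ≤ t) (h1 : t < 1) (b : ℕ) :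
    ∑ i ∈ Finset.Icc 1 b, t ^ i ≤ t / (1 - t) := by
  have h1t : (0:ℝ) < 1 - t := by linarith
  have key : ∀ b : ℕ, ∑ i ∈ Finset.Icc 1 b, t ^ i = t * ∑ i ∈ Finset.range b, t ^ i := by
    intro b
    induction b with
    | zero => simp
    | succ b ih =>
        rw [Finset.sum_Icc_succ_top (by omega), ih, Finset.sum_range_succ]
        ring
  rw [key]
  have hg : ∑ i ∈ Finset.range b, t ^ i ≤ 1 / (1 - t) := by
    rcases eq_or_ne t 1 with h | h
    · exact absurd h (by intro h'; rw [h'] at h1; linarith)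
    · rw [geom_sum_eq h]
      have heq : (t ^ b - 1) / (t - 1) = (1 - t ^ b) / (1 - t) := by
        rw [← neg_div_neg_eq]; ring_nf
      rw [heq, div_le_div_iff₀ h1t h1t]
      have hb0 : (0:ℝ) ≤ t ^ b := pow_nonneg h0 b
      nlinarith
  calc t * ∑ i ∈ Finset.range b, t ^ i ≤ t * (1 / (1 - t)) :=
        mul_le_mul_of_nonneg_left hg h0
    _ = t / (1 - t) := by ring

lemma sum_pow_shift_le {t : ℝ} (h0 : 0 ≤ t) (h1 : t < 1) (j a b : ℕ) :
    ∑ k ∈ (Finset.Icc a b).filter (fun k => j < k), t ^ (k - j) ≤ t / (1 - t) := by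
  set S := (Finset.Icc a b).filter (fun k => j < k) with hS
  have hinj : ∀ k₁ ∈ S, ∀ k₂ ∈ S, k₁ - j = k₂ - j → k₁ = k₂ := by
    intro k₁ h₁ k₂ h₂ h
    simp only [hS, Finset.mem_filter, Finset.mem_Icc] at h₁ h₂
    omega
  have heq : ∑ k ∈ S, t ^ (k - j) = ∑ i ∈ S.image (fun k => k - j), t ^ i :=
    (Finset.sum_image hinj).symm
  rw [heq]
  refine le_trans (Finset.sum_le_sum_of_subset_of_nonneg ?_ (fun i _ _ => pow_nonneg h0 i))
    (geom_sum_Icc_le h0 h1 b)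
  intro i hi
  simp only [Finset.mem_image, hS, Finset.mem_filter, Finset.mem_Icc] at hi
  obtain ⟨k, ⟨⟨hak, hkb⟩, hjk⟩, rfl⟩ := hi
  simp only [Finset.mem_Icc]
  omega

section Coding

variable {X : Type*} [MetricSpace X] {m : ℕ}
  (f : Fin m → X → X) (F : Set X) (hinv : F = ⋃ i, f i '' F)

include hinv in
def fF (i : Fin m) (z : ↥F) : ↥F :=
  ⟨f i z, by
    have h1 : f i (z : X) ∈ f i '' F := Set.mem_image_of_mem _ z.2
    have h2 : ⋃ i, f i '' F ⊆ F := hinv.ge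
    exact h2 (Set.mem_iUnion.2 ⟨i, h1⟩)⟩

include hinv in
lemma exists_peel (x : ↥F) : ∃ iy : Fin m × ↥F, f iy.1 ((iy.2 : X)) = (x : X) := by
  have hx := hinv.le x.2
  rcases Set.mem_iUnion.1 hx with ⟨i, y, hyF, hfy⟩
  exact ⟨⟨i, ⟨y, hyF⟩⟩, hfy⟩

def peel (x : ↥F) : Fin m × ↥F := (exists_peel f F hinv x).choose

lemma peel_spec (x : ↥F) : f (peel f F hinv x).1 ((peel f F hinv x).2 : X) = (x : X) :=
  (exists_peel f F hinv x).choose_spec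

def pe (x : ↥F) : ℕ → ↥F
  | 0 => x
  | (k+1) => (peel f F hinv (pe x k)).2

def dig (x : ↥F) (k : ℕ) : Fin m := (peel f F hinv (pe f F hinv x k)).1

lemma fF_pe (x : ↥F) (k : ℕ) :
    fF f F hinv (dig f F hinv x k) (pe f F hinv x (k+1)) = pe f F hinv x k :=
  Subtype.ext (peel_spec f F hinv (pe f F hinv x k))

def app (l : List (Fin m)) (z : ↥F) : ↥F := l.foldr (fF f F hinv) z

lemma app_append (l₁ l₂ : List (Fin m)) (z : ↥F) :
    app f F hinv (l₁ ++ l₂) z = app f F hinv l₁ (app f F hinv l₂ z) := by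
  simp [app, List.foldr_append]

def word (x : ↥F) : ℕ → List (Fin m)
  | 0 => []
  | (k+1) => word x k ++ [dig f F hinv x k]

lemma word_length (x : ↥F) (k : ℕ) : (word f F hinv x k).length = k := by
  induction k with
  | zero => rfl
  | succ k ih => simp [word, ih]

lemma app_word (x : ↥F) (k : ℕ) :
    app f F hinv (word f F hinv x k) (pe f F hinv x k) = x := by
  induction k with
  | zero => rfl
  | succ k ih =>
      rw [word, app_append]
      have : app f F hinv [dig f F hinv x k] (pe f F hinv x (k+1))
          = pe f F hinv x k := fF_pe f F hinv x k
      rw [this, ih]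

def ratio (r : Fin m → ℝ) (l : List (Fin m)) : ℝ := (l.map r).prod

lemma ratio_append (r : Fin m → ℝ) (l₁ l₂ : List (Fin m)) :
    ratio r (l₁ ++ l₂) = ratio r l₁ * ratio r l₂ := by
  simp [ratio]

lemma ratio_pos (r : Fin m → ℝ) (hr : ∀ i, 0 < r i) (l : List (Fin m)) :
    0 < ratio r l := by
  induction l with
  | nil => simp [ratio]
  | cons i l ih => simpa [ratio] using mul_pos (hr i) ih

variable (r : Fin m → ℝ) (hsim : ∀ i, ∀ x y : X, dist (f i x) (f i y) = r i * dist x y)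

include hsim in
lemma dist_fF (i : Fin m) (z z' : ↥F) :
    dist (fF f F hinv i z) (fF f F hinv i z') = r i * dist z z' := by
  rw [Subtype.dist_eq, Subtype.dist_eq]
  exact hsim i z z'

include hsim in
lemma dist_app (l : List (Fin m)) (z z' : ↥F) :
    dist (app f F hinv l z) (app f F hinv l z') = ratio r l * dist z z' := by
  induction l with
  | nil => simp [app, ratio]
  | cons i l ih =>
      have : app f F hinv (i :: l) z = fF f F hinv i (app f F hinv l z) := rfl
      rw [this, show app f F hinv (i :: l) z' = fF f F hinv i (app f F hinv l z') from rfl,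
        dist_fF f F hinv r hsim, ih]
      simp [ratio]
      ring

lemma word_prefix_eq (x y : ↥F) (k : ℕ)
    (h : ∀ l, l < k → dig f F hinv x l = dig f F hinv y l) :
    word f F hinv x k = word f F hinv y k := by
  induction k with
  | zero => rfl
  | succ k ih =>
      rw [word, word, ih (fun l hl => h l (by omega)), h k (by omega)]

lemma ratio_word_le (hr : ∀ i, 0 < r i) {ρ : ℝ} (hρ : ∀ i, r i ≤ ρ)
    (x : ↥F) {j k : ℕ} (hjk : j ≤ k) :
    ratio r (word f F hinv x k) ≤ ratio r (word f F hinv x j) * ρ ^ (k - j) := by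
  induction k with
  | zero =>
      have : j = 0 := by omega
      subst this; simp
  | succ k ih =>
      rcases Nat.lt_or_ge j (k+1) with h | h
      · have hjk' : j ≤ k := by omega
        rw [word, ratio_append]
        have hρ0 : 0 < ρ := lt_of_lt_of_le (hr (dig f F hinv x k)) (hρ _)
        have h1 : ratio r [dig f F hinv x k] ≤ ρ := by simp [ratio, hρ _]
        have h2 := ih hjk'
        have hrnn : 0 ≤ ratio r (word f F hinv x k) := (ratio_pos r hr _).le
        calc ratio r (word f F hinv x k) * ratio r [dig f F hinv x k]
            ≤ (ratio r (word f F hinv x j) * ρ ^ (k - j)) * ρ := by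
              apply mul_le_mul h2 h1 (by simp [ratio]; exact (hr _).le)
                (mul_nonneg (ratio_pos r hr _).le (pow_nonneg hρ0.le _))
        _ = ratio r (word f F hinv x j) * ρ ^ (k + 1 - j) := by
              rw [mul_assoc, ← pow_succ]
              congr 2
              omega
      · have : j = k + 1 := by omega
        subst this; simp

lemma word_take (x : ↥F) : ∀ {n k : ℕ}, k ≤ n →
    (word f F hinv x n).take k = word f F hinv x k := by
  intro n
  induction n with
  | zero => intro k hk; interval_cases k; rfl
  | succ n ih =>
      intro k hk
      rcases Nat.lt_or_ge k (n+1) with h | h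
      · rw [word, List.take_append_of_le_length (by rw [word_length]; omega)]
        exact ih (by omega)
      · have : k = n + 1 := by omega
        subst this
        exact List.take_of_length_le (le_of_eq (word_length f F hinv x (n+1)))

lemma pe_mem_cell (x : ↥F) (k : ℕ) :
    ((pe f F hinv x k : X)) ∈ f (dig f F hinv x k) '' F := by
  have h := fF_pe f F hinv x k
  have : ((pe f F hinv x k : X)) = f (dig f F hinv x k) ((pe f F hinv x (k+1) : X)) := by
    rw [← h]; rfl
  rw [this]
  exact Set.mem_image_of_mem _ (pe f F hinv x (k+1)).2

end Coding

section Main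

variable {X : Type*} [MetricSpace X] {m : ℕ}

lemma setup_lemma
    (f : Fin m → X → X) (r : Fin m → ℝ) (F : Set X)
    (hinv : F = ⋃ i, f i '' F)
    (hr : ∀ i, 0 < r i ∧ r i < 1) (hm : 0 < m)
    (hFne : F.Nonempty) (hFc : IsCompact F)
    (hsim : ∀ i, ∀ x y, dist (f i x) (f i y) = r i * dist x y)
    (hssc : ∀ i j, i ≠ j → Disjoint (f i '' F) (f j '' F))
    (hns : ¬ F.Subsingleton) :
    (2 ≤ m) ∧ (0 < Metric.diam F) ∧
    (∃ δ₀ : ℝ, 0 < δ₀ ∧ ∀ i i', i ≠ i' → ∀ a ∈ f i '' F, ∀ b ∈ f i' '' F, δ₀ ≤ dist a b) := by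
  have hD : 0 < Metric.diam F := by
    rcases Set.not_subsingleton_iff.1 hns with ⟨x, hx, y, hy, hxy⟩
    calc (0:ℝ) < dist x y := dist_pos.2 hxy
      _ ≤ Metric.diam F := Metric.dist_le_diam_of_mem hFc.isBounded hx hy
  have hm2 : 2 ≤ m := by
    by_contra h
    have hm1 : m = 1 := by omega
    subst hm1
    have i₀ : Fin 1 := ⟨0, by omega⟩
    have hdle : Metric.diam F ≤ r i₀ * Metric.diam F := by
      apply Metric.diam_le_of_forall_dist_le
        (mul_nonneg (hr i₀).1.le Metric.diam_nonneg)
      intro x hx y hy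
      have hx' := hinv.le hx
      have hy' := hinv.le hy
      rcases Set.mem_iUnion.1 hx' with ⟨i, x', hx'F, rfl⟩
      rcases Set.mem_iUnion.1 hy' with ⟨i', y', hy'F, rfl⟩
      have hi : f i = f i₀ := by rw [Subsingleton.elim i i₀]
      have hi' : f i' = f i₀ := by rw [Subsingleton.elim i' i₀]
      rw [hi, hi', hsim]
      exact mul_le_mul_of_nonneg_left
        (Metric.dist_le_diam_of_mem hFc.isBounded hx'F hy'F) (hr i₀).1.le
    nlinarith [(hr i₀).2, hD]
  refine ⟨hm2, hD, ?_⟩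
  have hpair : ∀ q : Fin m × Fin m, ∃ δ : ℝ, 0 < δ ∧
      (q.1 ≠ q.2 → ∀ a ∈ f q.1 '' F, ∀ b ∈ f q.2 '' F, δ ≤ dist a b) := by
    rintro ⟨i, i'⟩
    by_cases hii : i = i'
    · exact ⟨1, one_pos, fun h => (h hii).elim⟩
    · have hlip : ∀ j : Fin m, LipschitzWith (r j).toNNReal (f j) := by
        intro j
        apply LipschitzWith.of_dist_le_mul
        intro x y
        rw [hsim, Real.coe_toNNReal _ (hr j).1.le]
      have hs : IsCompact (f i '' F) := hFc.image (hlip i).continuous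
      have ht : IsCompact (f i' '' F) := hFc.image (hlip i').continuous
      have hdisj : Disjoint (f i '' F) (f i' '' F) := hssc i i' hii
      have hsubU : f i '' F ⊆ (f i' '' F)ᶜ := hdisj.subset_compl_right
      obtain ⟨δ, hδ0, hsub⟩ :=
        hs.exists_thickening_subset_open (isOpen_compl_iff.2 ht.isClosed) hsubU
      refine ⟨δ, hδ0, fun _ a ha b hb => ?_⟩
      by_contra hlt
      push_neg at hlt
      have : b ∈ Metric.thickening δ (f i '' F) :=
        Metric.mem_thickening_iff.2 ⟨a, ha, by rw [dist_comm]; exact hlt⟩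
      exact (hsub this) hb
  choose δf hδ0 hδ using hpair
  haveI : Nonempty (Fin m) := ⟨⟨0, hm⟩⟩
  refine ⟨Finset.univ.inf' Finset.univ_nonempty δf, ?_, ?_⟩
  · exact (Finset.lt_inf'_iff _).2 fun q _ => hδ0 q
  · intro i i' h a ha b hb
    exact le_trans (Finset.inf'_le _ (Finset.mem_univ (i, i'))) (hδ (i, i') h a ha b hb)



lemma dense_finite_range
    (f : Fin m → X → X) (r : Fin m → ℝ) (F : Set X)
    (hinv : F = ⋃ i, f i '' F)
    (hr : ∀ i, 0 < r i ∧ r i < 1) (hm : 0 < m)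
    (hFne : F.Nonempty) (hFc : IsCompact F)
    (hsim : ∀ i, ∀ x y, dist (f i x) (f i y) = r i * dist x y)
    (hssc : ∀ i j, i ≠ j → Disjoint (f i '' F) (f j '' F))
    (α ε : ℝ) (hα0 : 0 < α) (hα1 : α ≤ 1) (hε : 0 < ε)
    (g : ↥F → ℝ) (hg : ∀ x y : ↥F, |g x - g y| ≤ dist (x : X) (y : X) ^ α) :
    ∃ H : ↥F → ℝ, (∀ x y : ↥F, |H x - H y| ≤ dist (x : X) (y : X) ^ α) ∧
      (∀ x, |H x - g x| ≤ ε) ∧ (Set.range H).Finite := by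
  by_cases hsub : F.Subsingleton
  · refine ⟨g, hg, fun x => by simp [hε.le], ?_⟩
    haveI : Subsingleton ↥F := hsub.coe_sort
    exact (Set.subsingleton_range g).finite
  obtain ⟨hm2, hD, δ₀, hδ₀pos, hδ₀le⟩ :=
    setup_lemma f r F hinv hr hm hFne hFc hsim hssc hsub
  have hr1 : ∀ i, 0 < r i := fun i => (hr i).1
  haveI : Nonempty (Fin m) := ⟨⟨0, hm⟩⟩
  set ρ : ℝ := Finset.univ.sup' Finset.univ_nonempty r with hρdef
  have hρlt1 : ρ < 1 := (Finset.sup'_lt_iff _).2 fun i _ => (hr i).2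
  have hρle : ∀ i, r i ≤ ρ := fun i => Finset.le_sup' r (Finset.mem_univ i)
  have hρpos : 0 < ρ := lt_of_lt_of_le (hr ⟨0, hm⟩).1 (hρle ⟨0, hm⟩)
  haveI : Nonempty ↥F := hFne.to_subtype
  set z₀ : ↥F := Classical.arbitrary ↥F with hz₀def
  set D : ℝ := Metric.diam F with hDdef
  set t : ℝ := ρ ^ α with htdef
  have ht0 : 0 < t := Real.rpow_pos_of_pos hρpos α
  have ht1 : t < 1 := Real.rpow_lt_one hρpos.le hρlt1 hα0
  set Dα : ℝ := D ^ α with hDαdef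
  have hDα0 : 0 < Dα := Real.rpow_pos_of_pos hD α
  set γ : ℝ := min (1/2) (ε / (4 * (Dα + 1))) with hγdef
  have hγ0 : 0 < γ := lt_min (by norm_num) (by positivity)
  have hγhalf : γ ≤ 1/2 := min_le_left _ _
  have hγDα : γ * Dα ≤ ε / 4 := by
    have h1 : γ ≤ ε / (4 * (Dα + 1)) := min_le_right _ _
    have h2 : γ * Dα ≤ (ε / (4 * (Dα + 1))) * Dα :=
      mul_le_mul_of_nonneg_right h1 hDα0.le
    calc γ * Dα ≤ (ε / (4 * (Dα + 1))) * Dα := h2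
      _ ≤ ε / 4 := by
          rw [div_mul_eq_mul_div, div_le_div_iff₀ (by positivity) (by norm_num)]
          nlinarith
  set C : ℝ := (2 * D / δ₀) ^ α with hCdef
  have hC0 : 0 < C := Real.rpow_pos_of_pos (by positivity) α
  set B : ℝ := C * (t / (1 - t)) with hBdef
  have hB0 : 0 < B := by
    apply mul_pos hC0
    apply div_pos ht0
    linarith
  set L : ℕ := Nat.ceil (2 * B / γ) + 1 with hLdef
  have hL1 : 1 ≤ L := by omega
  have hL0 : (0:ℝ) < L := by exact_mod_cast hL1
  have hLbig : B / L ≤ γ / 2 := by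
    rw [div_le_div_iff₀ hL0 (by norm_num)]
    have h1 : 2 * B / γ ≤ (L : ℝ) := by
      calc 2 * B / γ ≤ (Nat.ceil (2 * B / γ) : ℝ) := Nat.le_ceil _
        _ ≤ (L : ℝ) := by exact_mod_cast Nat.le_succ _
    calc B * 2 = (2 * B / γ) * γ := by rw [div_mul_cancel₀ _ hγ0.ne']; ring
      _ ≤ (L : ℝ) * γ := mul_le_mul_of_nonneg_right h1 hγ0.le
      _ = γ * L := by ring
  obtain ⟨M, hM⟩ := exists_pow_lt_of_lt_one
    (show (0:ℝ) < ε / (4 * (Dα + 1)) by positivity) ht1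
  have hMbound : t ^ (M+1) * Dα ≤ ε / 4 := by
    have h1 : t ^ (M+1) ≤ t ^ M := pow_le_pow_of_le_one ht0.le ht1.le (Nat.le_succ M)
    have h2 : t ^ (M+1) ≤ ε / (4 * (Dα + 1)) := le_of_lt (lt_of_le_of_lt h1 hM)
    calc t ^ (M+1) * Dα ≤ (ε / (4 * (Dα + 1))) * Dα :=
          mul_le_mul_of_nonneg_right h2 hDα0.le
      _ ≤ ε / 4 := by
          rw [div_mul_eq_mul_div, div_le_div_iff₀ (by positivity) (by norm_num)]
          nlinarith
  set n : ℕ := M + L with hndef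
  set gt : ↥F → ℝ := fun z => g z₀ + (1 - γ) * (g z - g z₀) with hgtdef
  have hγ1 : (0:ℝ) ≤ 1 - γ := by linarith
  have hgt_holder : ∀ a b : ↥F, |gt a - gt b| ≤ (1-γ) * dist (a : X) (b : X) ^ α := by
    intro a b
    have : gt a - gt b = (1 - γ) * (g a - g b) := by rw [hgtdef]; ring
    rw [this, abs_mul, abs_of_nonneg hγ1]
    exact mul_le_mul_of_nonneg_left (hg a b) hγ1
  have hgt_close : ∀ z : ↥F, |gt z - g z| ≤ γ * Dα := by
    intro z
    have h1 : gt z - g z = -(γ * (g z - g z₀)) := by rw [hgtdef]; ring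
    rw [h1, abs_neg, abs_mul, abs_of_nonneg hγ0.le]
    apply mul_le_mul_of_nonneg_left _ hγ0.le
    calc |g z - g z₀| ≤ dist (z : X) (z₀ : X) ^ α := hg z z₀
      _ ≤ Dα := by
          rw [hDαdef]
          exact Real.rpow_le_rpow dist_nonneg
            (Metric.dist_le_diam_of_mem hFc.isBounded z.2 z₀.2) hα0.le
  set A : ↥F → ℕ → ↥F := fun x k => app f F hinv (word f F hinv x k) z₀ with hAdef
  set H : ↥F → ℝ := fun x => (∑ k ∈ Finset.Icc (M+1) n, gt (A x k)) / L with hHdef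
  have hcard : (Finset.Icc (M+1) n).card = L := by
    rw [Nat.card_Icc]; omega
  have hAdist : ∀ (x : ↥F) (k : ℕ), dist (A x k) x ≤ ratio r (word f F hinv x k) * D := by
    intro x k
    have h1 : A x k = app f F hinv (word f F hinv x k) z₀ := rfl
    have h2 : x = app f F hinv (word f F hinv x k) (pe f F hinv x k) :=
      (app_word f F hinv x k).symm
    calc dist (A x k) x
        = dist (app f F hinv (word f F hinv x k) z₀)
            (app f F hinv (word f F hinv x k) (pe f F hinv x k)) := by rw [h1, ← h2]
      _ = ratio r (word f F hinv x k) * dist z₀ (pe f F hinv x k) :=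
          dist_app f F hinv r hsim _ _ _
      _ ≤ ratio r (word f F hinv x k) * D := by
          apply mul_le_mul_of_nonneg_left _ (ratio_pos r hr1 _).le
          rw [Subtype.dist_eq]
          exact Metric.dist_le_diam_of_mem hFc.isBounded z₀.2 (pe f F hinv x k).2
  have hratio_pow : ∀ (x : ↥F) (k : ℕ), ratio r (word f F hinv x k) ≤ ρ ^ k := by
    intro x k
    have := ratio_word_le f F hinv r hr1 hρle x (Nat.zero_le k)
    simpa [word, ratio] using this
  -- closeness
  have hclose : ∀ x : ↥F, |H x - g x| ≤ ε := by
    intro x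
    have hterm : ∀ k ∈ Finset.Icc (M+1) n, |gt (A x k) - g x| ≤ ε/2 := by
      intro k hk
      rw [Finset.mem_Icc] at hk
      have h1 : |gt (A x k) - g (A x k)| ≤ γ * Dα := hgt_close _
      have hAx : dist (A x k) x ≤ ρ ^ k * D :=
        le_trans (hAdist x k) (mul_le_mul_of_nonneg_right (hratio_pow x k) hD.le)
      have h2 : |g (A x k) - g x| ≤ t ^ (M+1) * Dα := by
        calc |g (A x k) - g x| ≤ dist ((A x k : ↥F) : X) (x : X) ^ α := hg _ _
          _ ≤ (ρ ^ k * D) ^ α := Real.rpow_le_rpow dist_nonneg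
              (by rw [← Subtype.dist_eq]; exact hAx) hα0.le
          _ = t ^ k * Dα := by
              rw [Real.mul_rpow (pow_nonneg hρpos.le _) hD.le, pow_rpow_comm hρpos.le]
          _ ≤ t ^ (M+1) * Dα := by
              apply mul_le_mul_of_nonneg_right _ hDα0.le
              exact pow_le_pow_of_le_one ht0.le ht1.le hk.1
      calc |gt (A x k) - g x|
          ≤ |gt (A x k) - g (A x k)| + |g (A x k) - g x| := abs_sub_le _ _ _
        _ ≤ γ * Dα + t ^ (M+1) * Dα := add_le_add h1 h2
        _ ≤ ε/4 + ε/4 := add_le_add hγDα hMbound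
        _ = ε/2 := by ring
    have hHx : H x - g x = (∑ k ∈ Finset.Icc (M+1) n, (gt (A x k) - g x)) / L := by
      rw [hHdef]
      simp only
      rw [Finset.sum_sub_distrib, Finset.sum_const, hcard, sub_div]
      congr 1
      rw [nsmul_eq_mul]
      field_simp
    rw [hHx, abs_div, abs_of_nonneg (le_of_lt hL0)]
    rw [div_le_iff₀ hL0]
    calc |∑ k ∈ Finset.Icc (M+1) n, (gt (A x k) - g x)|
        ≤ ∑ k ∈ Finset.Icc (M+1) n, |gt (A x k) - g x| := Finset.abs_sum_le_sum_abs _ _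
      _ ≤ ∑ k ∈ Finset.Icc (M+1) n, (ε/2) := Finset.sum_le_sum hterm
      _ = L * (ε/2) := by rw [Finset.sum_const, hcard, nsmul_eq_mul]
      _ ≤ ε * L := by nlinarith
  -- Hölder
  have hA_eq : ∀ (x : ↥F) (k : ℕ), A x k = app f F hinv (word f F hinv x k) z₀ :=
    fun x k => rfl
  have hH_eq : ∀ x : ↥F, H x = (∑ k ∈ Finset.Icc (M+1) n, gt (A x k)) / L :=
    fun x => rfl
  have hholder : ∀ x y : ↥F, |H x - H y| ≤ dist (x : X) (y : X) ^ α := by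
    intro x y
    rw [← Subtype.dist_eq]
    by_cases hcase : ∀ k, dig f F hinv x k = dig f F hinv y k
    · have hHxy : H x = H y := by
        rw [hH_eq, hH_eq]
        congr 1
        apply Finset.sum_congr rfl
        intro k _
        have hw : word f F hinv x k = word f F hinv y k :=
          word_prefix_eq f F hinv x y k (fun l _ => hcase l)
        rw [hA_eq, hA_eq, hw]
      rw [hHxy, sub_self, abs_zero]
      exact Real.rpow_nonneg dist_nonneg α
    · push_neg at hcase
      set j := Nat.find hcase with hjdef
      have hj : dig f F hinv x j ≠ dig f F hinv y j := Nat.find_spec hcase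
      have hjmin : ∀ l, l < j → dig f F hinv x l = dig f F hinv y l := by
        intro l hl
        exact not_not.1 (Nat.find_min hcase hl)
      have hword_j : word f F hinv x j = word f F hinv y j :=
        word_prefix_eq f F hinv x y j hjmin
      set Ru := ratio r (word f F hinv x j) with hRudef
      have hRu0 : 0 < Ru := ratio_pos r hr1 _
      set d := dist x y with hddef
      have hxy_eq : d = Ru * dist (pe f F hinv x j) (pe f F hinv y j) := by
        conv_lhs => rw [hddef, ← app_word f F hinv x j, ← app_word f F hinv y j,
          ← hword_j]
        exact dist_app f F hinv r hsim _ _ _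
      have hsep : δ₀ ≤ dist (pe f F hinv x j) (pe f F hinv y j) := by
        rw [Subtype.dist_eq]
        exact hδ₀le _ _ hj _ (pe_mem_cell f F hinv x j) _ (pe_mem_cell f F hinv y j)
      have hd_lb : Ru * δ₀ ≤ d := by
        rw [hxy_eq]
        exact mul_le_mul_of_nonneg_left hsep hRu0.le
      have hd0 : 0 < d := lt_of_lt_of_le (mul_pos hRu0 hδ₀pos) hd_lb
      have hterm : ∀ k ∈ Finset.Icc (M+1) n,
          |gt (A x k) - gt (A y k)| ≤
            (if j < k then (1-γ) * (d ^ α + d ^ α * (C * t ^ (k - j))) else 0) := by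
        intro k hk
        by_cases hjk : j < k
        · rw [if_pos hjk]
          have hwk : ratio r (word f F hinv x k) ≤ Ru * ρ ^ (k - j) := by
            have := ratio_word_le f F hinv r hr1 hρle x (le_of_lt hjk)
            rwa [← hRudef] at this
          have hwk' : ratio r (word f F hinv y k) ≤ Ru * ρ ^ (k - j) := by
            have h2 := ratio_word_le f F hinv r hr1 hρle y (le_of_lt hjk)
            rwa [← hword_j, ← hRudef] at h2
          have hdA : dist (A x k) (A y k) ≤ d + 2 * Ru * ρ ^ (k-j) * D := by
            have e1 : dist (A x k) x ≤ Ru * ρ ^ (k-j) * D :=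
              le_trans (hAdist x k) (mul_le_mul_of_nonneg_right hwk hD.le)
            have e2 : dist y (A y k) ≤ Ru * ρ ^ (k-j) * D := by
              rw [dist_comm]
              exact le_trans (hAdist y k) (mul_le_mul_of_nonneg_right hwk' hD.le)
            have e3 : dist (A x k) (A y k) ≤ dist (A x k) x + dist x y + dist y (A y k) :=
              dist_triangle4 _ _ _ _
            rw [← hddef] at e3
            linarith
          have hs0 : (0:ℝ) ≤ 2 * Ru * ρ ^ (k-j) * D := by positivity
          have hRu_le : Ru ≤ d / δ₀ := by
            rw [le_div_iff₀ hδ₀pos]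
            linarith
          have hsd : 2 * Ru * ρ ^ (k-j) * D ≤ d * (2 * D / δ₀ * ρ ^ (k-j)) := by
            have : 2 * Ru * ρ ^ (k-j) * D ≤ 2 * (d / δ₀) * ρ ^ (k-j) * D := by
              have hpow0 : (0:ℝ) ≤ ρ ^ (k-j) := pow_nonneg hρpos.le _
              nlinarith
            calc 2 * Ru * ρ ^ (k-j) * D ≤ 2 * (d / δ₀) * ρ ^ (k-j) * D := this
              _ = d * (2 * D / δ₀ * ρ ^ (k-j)) := by field_simp
          have key : |gt (A x k) - gt (A y k)| ≤ (1-γ) * (d + 2*Ru*ρ^(k-j)*D) ^ α := by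
            refine le_trans (hgt_holder _ _) ?_
            apply mul_le_mul_of_nonneg_left _ hγ1
            apply Real.rpow_le_rpow dist_nonneg _ hα0.le
            rw [← Subtype.dist_eq]
            exact hdA
          refine le_trans key ?_
          apply mul_le_mul_of_nonneg_left _ hγ1
          calc (d + 2*Ru*ρ^(k-j)*D) ^ α
              ≤ d ^ α + (2*Ru*ρ^(k-j)*D) ^ α := add_rpow_le hd0.le hs0 hα0.le hα1
            _ ≤ d ^ α + (d * (2 * D / δ₀ * ρ ^ (k-j))) ^ α :=
                add_le_add le_rfl (Real.rpow_le_rpow hs0 hsd hα0.le)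
            _ = d ^ α + d ^ α * (C * t ^ (k-j)) := by
                rw [Real.mul_rpow hd0.le (by positivity),
                  Real.mul_rpow (by positivity) (pow_nonneg hρpos.le _),
                  pow_rpow_comm hρpos.le]
        · rw [if_neg hjk]
          have hkj : k ≤ j := Nat.le_of_not_lt hjk
          have hw : word f F hinv x k = word f F hinv y k :=
            word_prefix_eq f F hinv x y k (fun l hl => hjmin l (lt_of_lt_of_le hl hkj))
          have hA2 : A x k = A y k := by rw [hA_eq, hA_eq, hw]
          rw [hA2, sub_self, abs_zero]
      have hHxy : H x - H y = (∑ k ∈ Finset.Icc (M+1) n, (gt (A x k) - gt (A y k))) / L := by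
        rw [hH_eq, hH_eq, ← sub_div, ← Finset.sum_sub_distrib]
      have hsum1 : |H x - H y| ≤ (∑ k ∈ Finset.Icc (M+1) n,
          if j < k then (1-γ) * (d ^ α + d ^ α * (C * t ^ (k - j))) else 0) / L := by
        rw [hHxy, abs_div, abs_of_nonneg hL0.le]
        have hb : |∑ k ∈ Finset.Icc (M+1) n, (gt (A x k) - gt (A y k))|
            ≤ ∑ k ∈ Finset.Icc (M+1) n,
              if j < k then (1-γ) * (d ^ α + d ^ α * (C * t ^ (k - j))) else 0 :=
          le_trans (Finset.abs_sum_le_sum_abs _ _) (Finset.sum_le_sum hterm)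
        gcongr
      have hsum2 : (∑ k ∈ Finset.Icc (M+1) n,
            if j < k then (1-γ) * (d ^ α + d ^ α * (C * t ^ (k - j))) else 0)
          ≤ (1-γ) * ((L : ℝ) * d ^ α + d ^ α * C * (t / (1-t))) := by
        rw [← Finset.sum_filter]
        have expand : ∀ k : ℕ, (1-γ) * (d ^ α + d ^ α * (C * t ^ (k - j)))
            = (1-γ) * d ^ α + ((1-γ) * d ^ α * C) * t ^ (k-j) := by intro k; ring
        simp_rw [expand]
        rw [Finset.sum_add_distrib, Finset.sum_const, nsmul_eq_mul, ← Finset.mul_sum]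
        have hcardS : ((((Finset.Icc (M+1) n).filter (fun k => j < k)).card : ℕ) : ℝ)
            ≤ (L : ℝ) := by
          exact_mod_cast le_trans (Finset.card_filter_le _ _) hcard.le
        have hgeom : ∑ k ∈ (Finset.Icc (M+1) n).filter (fun k => j < k), t ^ (k-j)
            ≤ t / (1-t) := sum_pow_shift_le ht0.le ht1 j (M+1) n
        have hdα0 : (0:ℝ) < d ^ α := Real.rpow_pos_of_pos hd0 α
        have hcoef : (0:ℝ) ≤ (1-γ) * d ^ α * C := by positivity
        nlinarith [mul_le_mul_of_nonneg_left hgeom hcoef,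
          mul_le_mul_of_nonneg_right hcardS (mul_nonneg hγ1 hdα0.le)]
      have hfinal : (1-γ) * ((L : ℝ) * d ^ α + d ^ α * C * (t / (1-t))) / L ≤ d ^ α := by
        have hdα0 : (0:ℝ) < d ^ α := Real.rpow_pos_of_pos hd0 α
        rw [div_le_iff₀ hL0]
        have hBL : B ≤ (γ/2) * L := by
          have := hLbig
          rw [div_le_div_iff₀ hL0 (by norm_num : (0:ℝ) < 2)] at this
          linarith
        have hBexp : d ^ α * C * (t / (1-t)) = d ^ α * B := by rw [hBdef]; ring
        rw [hBexp]
        have h1 : (1-γ) * ((L : ℝ) * d ^ α + d ^ α * B)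
            ≤ (1-γ) * ((L : ℝ) * d ^ α + d ^ α * ((γ/2) * L)) := by
          apply mul_le_mul_of_nonneg_left _ hγ1
          apply add_le_add le_rfl
          exact mul_le_mul_of_nonneg_left hBL hdα0.le
        refine le_trans h1 ?_
        have : (1-γ) * ((L : ℝ) * d ^ α + d ^ α * ((γ/2) * L))
            = d ^ α * L * ((1-γ) * (1 + γ/2)) := by ring
        rw [this]
        have hle1 : (1-γ) * (1 + γ/2) ≤ 1 := by nlinarith
        nlinarith [mul_pos hdα0 hL0]
      calc |H x - H y| ≤ _ := hsum1
        _ ≤ (1-γ) * ((L : ℝ) * d ^ α + d ^ α * C * (t / (1-t))) / L := by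
            gcongr
        _ ≤ d ^ α := hfinal
  -- finite range
  have hfin : (Set.range H).Finite := by
    set Φ : List (Fin m) → ℝ :=
      fun l => (∑ k ∈ Finset.Icc (M+1) n, gt (app f F hinv (l.take k) z₀)) / L with hΦdef
    have hHΦ : ∀ x : ↥F, H x = Φ (word f F hinv x n) := by
      intro x
      rw [hH_eq, hΦdef]
      congr 1
      apply Finset.sum_congr rfl
      intro k hk
      rw [Finset.mem_Icc] at hk
      rw [hA_eq, word_take f F hinv x hk.2]
    have hsub2 : Set.range H ⊆ Φ '' {l : List (Fin m) | l.length = n} := by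
      rintro _ ⟨x, rfl⟩
      exact ⟨word f F hinv x n, word_length f F hinv x n, (hHΦ x).symm⟩
    exact ((List.finite_length_eq (Fin m) n).image Φ).subset hsub2
  exact ⟨H, hholder, hclose, hfin⟩

end Main

/-- `C₁^α(F)`: the set of 1-Hölder-α functions `F → ℝ`, as a subset of the bounded
continuous functions on `F` (which carry the supremum metric). -/
def HolderBall (α : ℝ) {p : ℕ} (F : Set (EuclideanSpace ℝ (Fin p))) :
    Set (BoundedContinuousFunction ↥F ℝ) :=
  {f | ∀ x y : ↥F,
    |f x - f y| ≤ dist (x : EuclideanSpace ℝ (Fin p)) (y : EuclideanSpace ℝ (Fin p)) ^ α}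

/-- `D_*^f(F) = sup {d : λ{r : dim_H (f⁻¹(r)) ≥ d} > 0}`. -/
def DstarF {p : ℕ} (F : Set (EuclideanSpace ℝ (Fin p))) (f : ↥F → ℝ) : ℝ :=
  sSup {d : ℝ | 0 < volume {r : ℝ | ENNReal.ofReal d ≤ dimH (Subtype.val '' (f ⁻¹' {r}))}}

/-- `D_*(α, F)`: the supremum over all dense Gδ subsets `G` of `C₁^α(F)` of
`inf {D_*^f(F) : f ∈ G}`. -/
def DStar {p : ℕ} (α : ℝ) (F : Set (EuclideanSpace ℝ (Fin p))) : ℝ :=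
  sSup {d : ℝ | ∃ G : Set ↥(HolderBall α F), Dense G ∧ IsGδ G ∧
    d = sInf ((fun g : ↥(HolderBall α F) =>
      DstarF F ⇑(g : BoundedContinuousFunction ↥F ℝ)) '' G)}

/-- If `F` is a self-similar set satisfying the strong separation
condition (the attractor of contracting similarities with pairwise disjoint images),
then for every `0 < α < 1` there is a dense Gδ subset `𝒢` of `C₁^α(F)` on which
`λ(f(F)) = 0` for every `f ∈ 𝒢`, and `D_*(α, F) = 0`. -/
theorem stmt12 {p : ℕ} (m : ℕ) (hm : 0 < m)
    (f : Fin m → EuclideanSpace ℝ (Fin p) → EuclideanSpace ℝ (Fin p))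
    (r : Fin m → ℝ) (hr : ∀ i, 0 < r i ∧ r i < 1)
    (hsim : ∀ i, ∀ x y, dist (f i x) (f i y) = r i * dist x y)
    (F : Set (EuclideanSpace ℝ (Fin p))) (hFne : F.Nonempty) (hFc : IsCompact F)
    (hinv : F = ⋃ i, f i '' F)
    (hssc : ∀ i j, i ≠ j → Disjoint (f i '' F) (f j '' F))
    (α : ℝ) (hα0 : 0 < α) (hα1 : α < 1) :
    (∃ G : Set ↥(HolderBall α F), Dense G ∧ IsGδ G ∧
      ∀ g ∈ G, volume (Set.range
        ⇑((g : ↥(HolderBall α F)) : BoundedContinuousFunction ↥F ℝ)) = 0) ∧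
    DStar α F = 0 := by
  haveI : Nonempty ↥F := hFne.to_subtype
  haveI : CompactSpace ↥F := isCompact_iff_compactSpace.mp hFc
  -- HolderBall is closed, hence a complete (Baire) space
  have hclosed : IsClosed (HolderBall α F) := by
    have heq : HolderBall α F = ⋂ (x : ↥F) (y : ↥F),
        {f : BoundedContinuousFunction ↥F ℝ |
          |f x - f y| ≤ dist (x : EuclideanSpace ℝ (Fin p)) (y : EuclideanSpace ℝ (Fin p)) ^ α} := by
      ext f
      simp only [HolderBall, Set.mem_setOf_eq, Set.mem_iInter]
    rw [heq]
    refine isClosed_iInter fun x => isClosed_iInter fun y => ?_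
    have hcont : Continuous fun f : BoundedContinuousFunction ↥F ℝ => |f x - f y| :=
      (((continuous_eval_const (F := BoundedContinuousFunction ↥F ℝ) x).sub
        (continuous_eval_const (F := BoundedContinuousFunction ↥F ℝ) y)).abs)
    exact isClosed_le hcont continuous_const
  haveI : CompleteSpace ↥(HolderBall α F) := hclosed.completeSpace_coe
  have h0mem : (0 : BoundedContinuousFunction ↥F ℝ) ∈ HolderBall α F := by
    intro x y
    simp only [BoundedContinuousFunction.coe_zero, Pi.zero_apply, sub_zero, abs_zero]
    exact Real.rpow_nonneg dist_nonneg α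
  haveI : Nonempty ↥(HolderBall α F) := ⟨⟨0, h0mem⟩⟩
  -- the open sets
  have hopen : ∀ c : ℝ≥0∞, IsOpen {g : ↥(HolderBall α F) |
      volume (Set.range ⇑(↑g : BoundedContinuousFunction ↥F ℝ)) < c} := by
    intro c
    rw [Metric.isOpen_iff]
    intro g hg
    simp only [Set.mem_setOf_eq] at hg
    set K := Set.range ⇑(↑g : BoundedContinuousFunction ↥F ℝ) with hK
    have hKc : IsCompact K := isCompact_range (↑g : BoundedContinuousFunction ↥F ℝ).continuous
    obtain ⟨V, hKV, hVopen, hVc⟩ := Set.exists_isOpen_lt_of_lt K c hg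
    obtain ⟨δ, hδ0, hthick⟩ := hKc.exists_thickening_subset_open hVopen hKV
    refine ⟨δ, hδ0, fun h hh => ?_⟩
    rw [Metric.mem_ball] at hh
    simp only [Set.mem_setOf_eq]
    have hsubset : Set.range ⇑(↑h : BoundedContinuousFunction ↥F ℝ)
        ⊆ Metric.thickening δ K := by
      rintro _ ⟨x, rfl⟩
      rw [Metric.mem_thickening_iff]
      refine ⟨(↑g : BoundedContinuousFunction ↥F ℝ) x, ⟨x, rfl⟩, ?_⟩
      calc dist ((↑h : BoundedContinuousFunction ↥F ℝ) x)
            ((↑g : BoundedContinuousFunction ↥F ℝ) x)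
          ≤ dist (↑h : BoundedContinuousFunction ↥F ℝ)
            (↑g : BoundedContinuousFunction ↥F ℝ) :=
            BoundedContinuousFunction.dist_coe_le_dist x
        _ < δ := by rw [← Subtype.dist_eq]; exact hh
    calc volume (Set.range ⇑(↑h : BoundedContinuousFunction ↥F ℝ))
        ≤ volume V := measure_mono (hsubset.trans hthick)
      _ < c := hVc
  -- density
  have hdense : ∀ c : ℝ≥0∞, 0 < c → Dense {g : ↥(HolderBall α F) |
      volume (Set.range ⇑(↑g : BoundedContinuousFunction ↥F ℝ)) < c} := by
    intro c hc
    rw [Metric.dense_iff]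
    intro g εr hεr
    obtain ⟨H, hH_holder, hH_close, hH_fin⟩ :=
      dense_finite_range f r F hinv hr hm hFne hFc hsim hssc α (εr/2) hα0 hα1.le
        (by positivity) ⇑(↑g : BoundedContinuousFunction ↥F ℝ) g.2
    have hHcont : Continuous H := by
      rw [Metric.continuous_iff]
      intro b εc hεc
      refine ⟨εc ^ α⁻¹, Real.rpow_pos_of_pos hεc _, fun a hab => ?_⟩
      have h1 := hH_holder a b
      have h2 : dist (a : EuclideanSpace ℝ (Fin p)) (b : EuclideanSpace ℝ (Fin p)) ^ α
          < εc := by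
        have h3 : dist (a : EuclideanSpace ℝ (Fin p)) (b : EuclideanSpace ℝ (Fin p))
            < εc ^ α⁻¹ := by rw [← Subtype.dist_eq]; exact hab
        calc dist (a : EuclideanSpace ℝ (Fin p)) (b : EuclideanSpace ℝ (Fin p)) ^ α
            < (εc ^ α⁻¹) ^ α := Real.rpow_lt_rpow dist_nonneg h3 hα0
          _ = εc := Real.rpow_inv_rpow hεc.le hα0.ne'
      rw [Real.dist_eq]
      exact lt_of_le_of_lt h1 h2
    have hHbdd : ∃ C, ∀ x y : ↥F, dist (H x) (H y) ≤ C := by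
      refine ⟨Metric.diam F ^ α, fun x y => ?_⟩
      rw [Real.dist_eq]
      refine le_trans (hH_holder x y) ?_
      exact Real.rpow_le_rpow dist_nonneg
        (Metric.dist_le_diam_of_mem hFc.isBounded x.2 y.2) hα0.le
    set Hb : BoundedContinuousFunction ↥F ℝ := ⟨⟨H, hHcont⟩, hHbdd⟩ with hHbdef
    have hHbmem : Hb ∈ HolderBall α F := fun x y => hH_holder x y
    have hHbdist : dist Hb (↑g : BoundedContinuousFunction ↥F ℝ) ≤ εr / 2 := by
      apply (BoundedContinuousFunction.dist_le (by positivity)).2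
      intro x
      rw [Real.dist_eq]
      exact hH_close x
    refine ⟨⟨Hb, hHbmem⟩, ?_, ?_⟩
    · rw [Metric.mem_ball, Subtype.dist_eq]
      calc dist Hb (↑g : BoundedContinuousFunction ↥F ℝ) ≤ εr / 2 := hHbdist
        _ < εr := by linarith
    · simp only [Set.mem_setOf_eq]
      have : volume (Set.range ⇑Hb) = 0 := hH_fin.measure_zero volume
      rw [this]
      exact hc
  -- the dense Gδ set
  set 𝒢 : Set ↥(HolderBall α F) := ⋂ k : ℕ, {g : ↥(HolderBall α F) |
      volume (Set.range ⇑(↑g : BoundedContinuousFunction ↥F ℝ)) < ((k : ℝ≥0∞)+1)⁻¹}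
    with h𝒢def
  have h𝒢Gδ : IsGδ 𝒢 := IsGδ.iInter_of_isOpen fun k => hopen _
  have h𝒢dense : Dense 𝒢 := by
    apply dense_iInter_of_isOpen (fun k => hopen _)
    intro k
    apply hdense
    simp [ENNReal.inv_pos]
  have h𝒢zero : ∀ g ∈ 𝒢,
      volume (Set.range ⇑(↑g : BoundedContinuousFunction ↥F ℝ)) = 0 := by
    intro g hgm
    by_contra h0
    obtain ⟨k, hk⟩ := ENNReal.exists_inv_nat_lt h0
    have h1 := Set.mem_iInter.1 hgm k
    simp only [Set.mem_setOf_eq] at h1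
    have h2 : ((k : ℝ≥0∞)+1)⁻¹ ≤ (k : ℝ≥0∞)⁻¹ :=
      ENNReal.inv_le_inv' le_self_add
    exact absurd (lt_of_lt_of_le (lt_trans hk h1) h2) (lt_irrefl _)
  -- DstarF generalities
  have hDstarF_eq : ∀ fn : ↥F → ℝ, DstarF F fn =
      sSup {d : ℝ | 0 < volume {r' : ℝ |
        ENNReal.ofReal d ≤ dimH (Subtype.val '' (fn ⁻¹' {r'}))}} := fun fn => rfl
  have h0memA : ∀ fn : ↥F → ℝ, (0:ℝ) ∈ {d : ℝ | 0 < volume {r' : ℝ |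
      ENNReal.ofReal d ≤ dimH (Subtype.val '' (fn ⁻¹' {r'}))}} := by
    intro fn
    simp only [Set.mem_setOf_eq, ENNReal.ofReal_zero]
    have : {r' : ℝ | (0:ℝ≥0∞) ≤ dimH (Subtype.val '' (fn ⁻¹' {r'}))} = Set.univ := by
      ext r'; simp [zero_le]
    rw [this, Real.volume_univ]
    exact ENNReal.zero_lt_top
  have hAbdd : ∀ fn : ↥F → ℝ, BddAbove {d : ℝ | 0 < volume {r' : ℝ |
      ENNReal.ofReal d ≤ dimH (Subtype.val '' (fn ⁻¹' {r'}))}} := by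
    intro fn
    refine ⟨(p:ℝ)+1, fun d hd => ?_⟩
    simp only [Set.mem_setOf_eq] at hd
    by_contra hdp
    push_neg at hdp
    have hempty : {r' : ℝ | ENNReal.ofReal d ≤ dimH (Subtype.val '' (fn ⁻¹' {r'}))} = ∅ := by
      ext r'
      simp only [Set.mem_setOf_eq, Set.mem_empty_iff_false, iff_false, not_le]
      calc dimH (Subtype.val '' (fn ⁻¹' {r'}))
          ≤ dimH (Set.univ : Set (EuclideanSpace ℝ (Fin p))) := dimH_mono (Set.subset_univ _)
        _ = (p : ℝ≥0∞) := by
            rw [Real.dimH_univ_eq_finrank, finrank_euclideanSpace_fin]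
        _ < ((p:ℕ):ℝ≥0∞) + 1 := by
            exact lt_of_lt_of_le (ENNReal.lt_add_right (by simp) one_ne_zero) le_rfl
        _ = ENNReal.ofReal ((p:ℝ)+1) := by
            rw [ENNReal.ofReal_add (by positivity) zero_le_one]
            simp [ENNReal.ofReal_natCast]
        _ ≤ ENNReal.ofReal d := ENNReal.ofReal_le_ofReal hdp.le
    rw [hempty] at hd
    simp at hd
  have hDstar_nonneg : ∀ fn : ↥F → ℝ, 0 ≤ DstarF F fn := by
    intro fn
    rw [hDstarF_eq]
    exact le_csSup (hAbdd fn) (h0memA fn)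
  have hDstar_zero : ∀ fn : ↥F → ℝ, volume (Set.range fn) = 0 → DstarF F fn = 0 := by
    intro fn h0
    rw [hDstarF_eq]
    have hA : {d : ℝ | 0 < volume {r' : ℝ |
        ENNReal.ofReal d ≤ dimH (Subtype.val '' (fn ⁻¹' {r'}))}} = Set.Iic 0 := by
      apply Set.eq_of_subset_of_subset
      · intro d hd
        simp only [Set.mem_Iic]
        by_contra hdpos
        push_neg at hdpos
        have hsub : {r' : ℝ | ENNReal.ofReal d ≤ dimH (Subtype.val '' (fn ⁻¹' {r'}))}
            ⊆ Set.range fn := by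
          intro r' hr'
          simp only [Set.mem_setOf_eq] at hr'
          by_contra hnr
          have hpre : fn ⁻¹' {r'} = ∅ := by
            ext x
            simp only [Set.mem_preimage, Set.mem_singleton_iff, Set.mem_empty_iff_false,
              iff_false]
            intro hx
            exact hnr ⟨x, hx⟩
          rw [hpre] at hr'
          simp only [Set.image_empty, dimH_empty] at hr'
          have : (0:ℝ≥0∞) < ENNReal.ofReal d := ENNReal.ofReal_pos.2 hdpos
          exact absurd (le_antisymm hr' zero_le) this.ne'
        have hmm : volume {r' : ℝ | ENNReal.ofReal d ≤
            dimH (Subtype.val '' (fn ⁻¹' {r'}))} ≤ volume (Set.range fn) :=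
          measure_mono hsub
        rw [h0] at hmm
        simp only [Set.mem_setOf_eq] at hd
        exact absurd (lt_of_lt_of_le hd hmm) (lt_irrefl _)
      · intro d hd
        simp only [Set.mem_Iic] at hd
        simp only [Set.mem_setOf_eq]
        have : {r' : ℝ | ENNReal.ofReal d ≤ dimH (Subtype.val '' (fn ⁻¹' {r'}))}
            = Set.univ := by
          ext r'
          simp only [Set.mem_setOf_eq, Set.mem_univ, iff_true]
          rw [ENNReal.ofReal_eq_zero.2 hd]
          exact zero_le
        rw [this, Real.volume_univ]
        exact ENNReal.zero_lt_top
    rw [hA, csSup_Iic]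
  -- conclusion
  have h𝒢ne : 𝒢.Nonempty := h𝒢dense.nonempty
  refine ⟨⟨𝒢, h𝒢dense, h𝒢Gδ, h𝒢zero⟩, ?_⟩
  have himg : (fun g : ↥(HolderBall α F) =>
      DstarF F ⇑(↑g : BoundedContinuousFunction ↥F ℝ)) '' 𝒢 = {0} := by
    apply Set.eq_of_subset_of_subset
    · rintro _ ⟨g, hg, rfl⟩
      simp only [Set.mem_singleton_iff]
      exact hDstar_zero _ (h𝒢zero g hg)
    · rintro _ rfl
      obtain ⟨g, hg⟩ := h𝒢ne
      exact ⟨g, hg, hDstar_zero _ (h𝒢zero g hg)⟩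
  have h0SS : (0:ℝ) ∈ {d : ℝ | ∃ G : Set ↥(HolderBall α F), Dense G ∧ IsGδ G ∧
      d = sInf ((fun g : ↥(HolderBall α F) =>
        DstarF F ⇑(g : BoundedContinuousFunction ↥F ℝ)) '' G)} :=
    ⟨𝒢, h𝒢dense, h𝒢Gδ, by rw [himg, csInf_singleton]⟩
  have hub : ∀ dd ∈ {d : ℝ | ∃ G : Set ↥(HolderBall α F), Dense G ∧ IsGδ G ∧
      d = sInf ((fun g : ↥(HolderBall α F) =>
        DstarF F ⇑(g : BoundedContinuousFunction ↥F ℝ)) '' G)}, dd ≤ 0 := by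
    rintro dd ⟨G, hGd, hGδ, rfl⟩
    have hint : Dense (G ∩ 𝒢) := Dense.inter_of_Gδ hGδ h𝒢Gδ hGd h𝒢dense
    obtain ⟨g₀, hg₀G, hg₀𝒢⟩ := hint.nonempty
    have hmemim : DstarF F ⇑(↑g₀ : BoundedContinuousFunction ↥F ℝ)
        ∈ (fun g : ↥(HolderBall α F) =>
          DstarF F ⇑(g : BoundedContinuousFunction ↥F ℝ)) '' G := ⟨g₀, hg₀G, rfl⟩
    have hbddb : BddBelow ((fun g : ↥(HolderBall α F) =>
        DstarF F ⇑(g : BoundedContinuousFunction ↥F ℝ)) '' G) := by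
      refine ⟨0, ?_⟩
      rintro _ ⟨g, hgG, rfl⟩
      exact hDstar_nonneg _
    calc sInf ((fun g : ↥(HolderBall α F) =>
          DstarF F ⇑(g : BoundedContinuousFunction ↥F ℝ)) '' G)
        ≤ DstarF F ⇑(↑g₀ : BoundedContinuousFunction ↥F ℝ) := csInf_le hbddb hmemim
      _ = 0 := hDstar_zero _ (h𝒢zero g₀ hg₀𝒢)
  show sSup _ = 0
  apply le_antisymm
  · exact csSup_le ⟨0, h0SS⟩ hub
  · exact le_csSup ⟨0, hub⟩ h0SS


end
end

section
/- Let C ⊆ [0,1] be the fat Cantor set with level-n interval length l_n = 1/(2^{n+1} − 1). Then the product set F = C × C ⊆ ℝ² admits a (1/2, 1/4) separated structure; in fact, for each k the family 𝒮_k of all sets F ∩ (I × I'), where I and I' range over the maximal subintervals of C_k, has the property that each element has diameter at most √2 · 2^{−k} and, for k ≥ 2, distinct elements are at distance at least (1/4) · 4^{−k}. -/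
noncomputable section

/-- `l_n = 1/(2^{n+1} − 1)`, the common length of the `2^n` maximal closed
subintervals of the stage-`n` set `C_n` of the fat Cantor set construction. -/
def lCant (n : ℕ) : ℝ := 1 / (2 ^ (n + 1) - 1)

/-- Auxiliary recursion computing the left endpoint of the level-`n` interval
indexed by a binary word (`false` = left child, `true` = right child). -/
def leftEndAux : ℕ → ℝ → List Bool → ℝ
  | _, a, [] => a
  | n, a, b :: w => leftEndAux (n + 1) (if b then a + lCant n - lCant (n + 1) else a) w

/-- The left endpoint of the interval of the fat Cantor set construction indexed by
the binary word `w` (an interval of level `w.length`). -/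
def leftEnd (w : List Bool) : ℝ := leftEndAux 0 0 w

/-- The stage-`n` set `C_n`: the union of the `2^n` closed intervals of length `l_n`. -/
def cantorStage (n : ℕ) : Set ℝ :=
  ⋃ (w : List Bool) (_ : w.length = n), Set.Icc (leftEnd w) (leftEnd w + lCant n)

/-- The fat Cantor set `C = ⋂ₙ C_n`. -/
def fatC : Set ℝ := ⋂ n : ℕ, cantorStage n

/-- The product set `F = C × C ⊆ ℝ²` (with the Euclidean metric). -/
def fatSquare : Set (EuclideanSpace ℝ (Fin 2)) := {x | x 0 ∈ fatC ∧ x 1 ∈ fatC}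

/-- The element `F ∩ (I × I')` of the family `𝒮_k`, where `I, I'` are the maximal
subintervals of `C_k` indexed by the binary words `w, u` of length `k`. -/
def piece (k : ℕ) (w u : List Bool) : Set (EuclideanSpace ℝ (Fin 2)) :=
  {x | x 0 ∈ Set.Icc (leftEnd w) (leftEnd w + lCant k) ∧
       x 1 ∈ Set.Icc (leftEnd u) (leftEnd u + lCant k)} ∩ fatSquare

/-- A nonempty set `F ⊆ ℝ^p` admits a `(ν, ρ)` separated structure. -/
def SepStructure {p : ℕ} (ν ρ : ℝ) (F : Set (EuclideanSpace ℝ (Fin p))) : Prop :=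
  ∃ K : ℝ, 0 < K ∧ ∀ k : ℕ, ∃ S : Finset (Set (EuclideanSpace ℝ (Fin p))),
    (F ⊆ ⋃ A ∈ S, A) ∧
    (∀ A ∈ S, EMetric.diam A < ENNReal.ofReal (K * ν ^ k)) ∧
    (∀ A ∈ S, ∀ B ∈ S, A ≠ B →
      ENNReal.ofReal ((1 / K) * ρ ^ k) < ⨅ x ∈ A, EMetric.infEdist x B)

/-! ### Auxiliary lemmas -/

lemma den_pos (n : ℕ) : (0:ℝ) < 2 ^ (n+1) - 1 := by
  have h : (1:ℝ) ≤ 2 ^ n := one_le_pow₀ (by norm_num)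
  have : (2:ℝ)^(n+1) = 2 * 2^n := by ring
  nlinarith

lemma lCant_pos (n : ℕ) : 0 < lCant n := div_pos one_pos (den_pos n)

lemma lCant_succ_le (n : ℕ) : lCant (n+1) ≤ lCant n := by
  unfold lCant
  apply one_div_le_one_div_of_le (den_pos n)
  have : (2:ℝ)^(n+1) ≤ 2^(n+2) := pow_le_pow_right₀ (by norm_num) (by omega)
  linarith

lemma lCant_le_inv_pow (k : ℕ) : lCant k ≤ ((2:ℝ) ^ k)⁻¹ := by
  unfold lCant
  rw [one_div]
  apply inv_anti₀ (by positivity)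
  have : (2:ℝ)^(k+1) = 2 * 2^k := by ring
  have h : (1:ℝ) ≤ 2 ^ k := one_le_pow₀ (by norm_num)
  linarith

/-- The gap removed in the middle of a level-`n` interval. -/
def gap (n : ℕ) : ℝ := lCant n - 2 * lCant (n + 1)

lemma gap_eq (n : ℕ) : gap n = 1 / ((2 ^ (n+1) - 1) * (2 ^ (n+2) - 1)) := by
  unfold gap lCant
  have h1 := den_pos n
  have h2 := den_pos (n+1)
  have he : (2:ℝ)^(n+2) = 2 * 2^(n+1) := by ring
  field_simp
  nlinarith [he]

lemma gap_pos (n : ℕ) : 0 < gap n := by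
  rw [gap_eq]
  exact div_pos one_pos (mul_pos (den_pos n) (den_pos (n+1)))

lemma gap_anti {m n : ℕ} (h : m ≤ n) : gap n ≤ gap m := by
  rw [gap_eq, gap_eq]
  have pm := den_pos m
  have hmn1 : (2:ℝ)^(m+1) - 1 ≤ 2^(n+1) - 1 := by
    have : (2:ℝ)^(m+1) ≤ 2^(n+1) := pow_le_pow_right₀ (by norm_num) (by omega)
    linarith
  have hmn2 : (2:ℝ)^(m+2) - 1 ≤ 2^(n+2) - 1 := by
    have : (2:ℝ)^(m+2) ≤ 2^(n+2) := pow_le_pow_right₀ (by norm_num) (by omega)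
    linarith
  apply one_div_le_one_div_of_le (mul_pos pm (den_pos (m+1)))
  exact mul_le_mul hmn1 hmn2 (by linarith [den_pos (m+1)]) (le_of_lt (den_pos n))

lemma gap_gt (k : ℕ) : (1/2) * (1/4)^(k+1) < gap k := by
  rw [gap_eq]
  have h1 := den_pos k
  have h2 := den_pos (k+1)
  rw [lt_div_iff₀ (mul_pos h1 h2)]
  have hx : (1:ℝ) ≤ 2 ^ k := one_le_pow₀ (by norm_num)
  have e1 : (2:ℝ)^(k+1) = 2 * 2^k := by ring
  have e2 : (2:ℝ)^(k+1+1) = 4 * 2^k := by ring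
  have e6 : ((1:ℝ)/4)^k * (2^k * 2^k) = 1 := by
    rw [← mul_pow, ← mul_pow]; norm_num
  have h4 : (0:ℝ) < (1/4)^k := by positivity
  have key : (0:ℝ) < (1/4)^k * (6*2^k - 1) := mul_pos h4 (by nlinarith)
  rw [e1, e2]
  have expand : 1/2*((1:ℝ)/4)^(k+1)*((2*2^k-1)*(4*2^k-1))
      = (1/4)^k*(2^k*2^k) - (1/8)*((1/4)^k*(6*2^k-1)) := by
    rw [pow_succ]; ring
  rw [expand, e6]
  linarith

lemma leftEndAux_bounds : ∀ (v : List Bool) (n : ℕ) (a : ℝ),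
    a ≤ leftEndAux n a v ∧ leftEndAux n a v + lCant (n + v.length) ≤ a + lCant n := by
  intro v
  induction v with
  | nil => intro n a; simp [leftEndAux]
  | cons b t ih =>
    intro n a
    simp only [leftEndAux, List.length_cons]
    have hrec := ih (n+1) (if b then a + lCant n - lCant (n + 1) else a)
    have harith : n + 1 + t.length = n + (t.length + 1) := by omega
    rw [harith] at hrec
    have hl := lCant_succ_le n
    have hp := lCant_pos (n+1)
    cases b <;> norm_num at hrec ⊢ <;> constructor <;> linarith [hrec.1, hrec.2]

lemma sep : ∀ (v v' : List Bool) (n : ℕ) (a : ℝ), v.length = v'.length →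
    leftEndAux n a v ≠ leftEndAux n a v' →
    ∀ x y : ℝ, leftEndAux n a v ≤ x → x ≤ leftEndAux n a v + lCant (n + v.length) →
      leftEndAux n a v' ≤ y → y ≤ leftEndAux n a v' + lCant (n + v'.length) →
      gap (n + v.length - 1) ≤ |x - y| := by
  intro v
  induction v with
  | nil =>
    intro v' n a hlen hne
    rw [List.length_eq_zero_iff.mp hlen.symm] at hne
    exact absurd rfl hne
  | cons b t ih =>
    intro v' n a hlen hne x y hx1 hx2 hy1 hy2
    cases v' with
    | nil => simp at hlen
    | cons b' t' =>
      simp only [List.length_cons, Nat.add_right_cancel_iff] at hlen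
      have hidx : n + (b :: t).length - 1 = n + t.length := by
        simp only [List.length_cons]; omega
      rw [hidx]
      have hidx2 : n + 1 + t.length = n + (b :: t).length := by
        simp only [List.length_cons]; omega
      have hidx3 : n + 1 + t'.length = n + (b' :: t').length := by
        simp only [List.length_cons]; omega
      cases b <;> cases b'
      · simp only [leftEndAux, if_neg (Bool.false_ne_true)] at hne hx1 hx2 hy1 hy2
        have := ih t' (n+1) a hlen hne x y hx1 (by rwa [hidx2]) hy1 (by rwa [hidx3])
        have he : n + 1 + t.length - 1 = n + t.length := by omega
        rwa [he] at this
      · simp only [leftEndAux, if_neg (Bool.false_ne_true), if_pos rfl] at hx1 hx2 hy1 hy2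
        have hb1 := (leftEndAux_bounds t (n+1) a).2
        have hb2 := (leftEndAux_bounds t' (n+1) (a + lCant n - lCant (n+1))).1
        have hxu : x ≤ a + lCant (n+1) := by rw [← hidx2] at hx2; linarith
        have hyl : a + lCant n - lCant (n+1) ≤ y := le_trans hb2 hy1
        have hg : gap n ≤ y - x := by unfold gap; linarith
        calc gap (n + t.length) ≤ gap n := gap_anti (by omega)
          _ ≤ y - x := hg
          _ ≤ |x - y| := by rw [abs_sub_comm]; exact le_abs_self _
      · simp only [leftEndAux, if_neg (Bool.false_ne_true), if_pos rfl] at hx1 hx2 hy1 hy2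
        have hb1 := (leftEndAux_bounds t' (n+1) a).2
        have hb2 := (leftEndAux_bounds t (n+1) (a + lCant n - lCant (n+1))).1
        have hyu : y ≤ a + lCant (n+1) := by rw [← hidx3] at hy2; linarith
        have hxl : a + lCant n - lCant (n+1) ≤ x := le_trans hb2 hx1
        have hg : gap n ≤ x - y := by unfold gap; linarith
        calc gap (n + t.length) ≤ gap n := gap_anti (by omega)
          _ ≤ x - y := hg
          _ ≤ |x - y| := le_abs_self _
      · simp only [leftEndAux, if_pos rfl] at hne hx1 hx2 hy1 hy2
        have := ih t' (n+1) (a + lCant n - lCant (n+1)) hlen hne x y hx1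
          (by rwa [hidx2]) hy1 (by rwa [hidx3])
        have he : n + 1 + t.length - 1 = n + t.length := by omega
        rwa [he] at this

lemma coord_le_dist (x y : EuclideanSpace ℝ (Fin 2)) (i : Fin 2) :
    dist (x i) (y i) ≤ dist x y := by
  rw [EuclideanSpace.dist_eq]
  have h : dist (x i) (y i) = Real.sqrt (dist (x i) (y i) ^ 2) := by
    rw [Real.sqrt_sq dist_nonneg]
  rw [h]
  apply Real.sqrt_le_sqrt
  exact Finset.single_le_sum (f := fun j => dist (x j) (y j) ^ 2)
    (fun j _ => sq_nonneg _) (Finset.mem_univ i)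

lemma dist_le_sqrt_two (x y : EuclideanSpace ℝ (Fin 2)) (c : ℝ) (hc : 0 ≤ c)
    (h0 : dist (x 0) (y 0) ≤ c) (h1 : dist (x 1) (y 1) ≤ c) :
    dist x y ≤ Real.sqrt 2 * c := by
  rw [EuclideanSpace.dist_eq, Fin.sum_univ_two]
  have h : Real.sqrt 2 * c = Real.sqrt (2 * c^2) := by
    rw [Real.sqrt_mul (by norm_num), Real.sqrt_sq hc]
  rw [h]
  apply Real.sqrt_le_sqrt
  nlinarith [dist_nonneg (x := x 0) (y := y 0), dist_nonneg (x := x 1) (y := y 1)]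

/-- Diameter bound for the pieces. -/
lemma piece_diam (k : ℕ) (w u : List Bool) :
    EMetric.diam (piece k w u) ≤ ENNReal.ofReal (Real.sqrt 2 * ((2 : ℝ) ^ k)⁻¹) := by
  apply EMetric.diam_le
  intro x hx y hy
  rw [edist_dist]
  apply ENNReal.ofReal_le_ofReal
  have hxp := hx.1
  have hyp := hy.1
  have h0 : dist (x 0) (y 0) ≤ lCant k := by
    have := Real.dist_le_of_mem_Icc hxp.1 hyp.1; linarith
  have h1 : dist (x 1) (y 1) ≤ lCant k := by
    have := Real.dist_le_of_mem_Icc hxp.2 hyp.2; linarith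
  calc dist x y ≤ Real.sqrt 2 * lCant k :=
        dist_le_sqrt_two x y (lCant k) (le_of_lt (lCant_pos k)) h0 h1
    _ ≤ Real.sqrt 2 * ((2:ℝ)^k)⁻¹ := by
        apply mul_le_mul_of_nonneg_left (lCant_le_inv_pow k) (Real.sqrt_nonneg 2)

/-- Distinct pieces differ in a coordinate interval. -/
lemma piece_ne_cases {k : ℕ} {w u w' u' : List Bool}
    (h : piece k w u ≠ piece k w' u') :
    leftEnd w ≠ leftEnd w' ∨ leftEnd u ≠ leftEnd u' := by
  by_contra hc
  push_neg at hc
  exact h (by unfold piece; rw [hc.1, hc.2])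

/-- Separation of distinct pieces. -/
lemma piece_sep {k : ℕ} {w u w' u' : List Bool}
    (hw : w.length = k) (hu : u.length = k) (hw' : w'.length = k) (hu' : u'.length = k)
    (h : piece k w u ≠ piece k w' u')
    {x y : EuclideanSpace ℝ (Fin 2)} (hx : x ∈ piece k w u) (hy : y ∈ piece k w' u') :
    gap (k - 1) ≤ dist x y := by
  rcases piece_ne_cases h with hne | hne
  · have hs := sep w w' 0 0 (by rw [hw, hw']) hne (x 0) (y 0)
      hx.1.1.1 (by have := hx.1.1.2; rwa [Nat.zero_add, hw])
      hy.1.1.1 (by have := hy.1.1.2; rwa [Nat.zero_add, hw'])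
    rw [Nat.zero_add, hw] at hs
    calc gap (k-1) ≤ |x 0 - y 0| := hs
      _ = dist (x 0) (y 0) := (Real.dist_eq _ _).symm
      _ ≤ dist x y := coord_le_dist x y 0
  · have hs := sep u u' 0 0 (by rw [hu, hu']) hne (x 1) (y 1)
      hx.1.2.1 (by have := hx.1.2.2; rwa [Nat.zero_add, hu])
      hy.1.2.1 (by have := hy.1.2.2; rwa [Nat.zero_add, hu'])
    rw [Nat.zero_add, hu] at hs
    calc gap (k-1) ≤ |x 1 - y 1| := hs
      _ = dist (x 1) (y 1) := (Real.dist_eq _ _).symm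
      _ ≤ dist x y := coord_le_dist x y 1

/-- The product `F = C × C` of the fat Cantor set with itself
admits a `(1/2, 1/4)` separated structure; in fact, for each `k`, every set
`F ∩ (I × I')` (for maximal subintervals `I, I'` of `C_k`) has diameter at most
`√2 · 2^{−k}`, and for `k ≥ 2` distinct such sets are at distance at least
`(1/4) · 4^{−k}`. -/
theorem stmt14 :
    SepStructure (1 / 2) (1 / 4) fatSquare ∧
    ∀ k : ℕ,
      (∀ w u : List Bool, w.length = k → u.length = k →
        EMetric.diam (piece k w u) ≤ ENNReal.ofReal (Real.sqrt 2 * ((2 : ℝ) ^ k)⁻¹)) ∧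
      (2 ≤ k → ∀ w u w' u' : List Bool,
        w.length = k → u.length = k → w'.length = k → u'.length = k →
        piece k w u ≠ piece k w' u' →
        ∀ x ∈ piece k w u, ∀ y ∈ piece k w' u',
          (1 / 4) * ((4 : ℝ) ^ k)⁻¹ ≤ dist x y) := by
  classical
  constructor
  · -- SepStructure
    refine ⟨2, by norm_num, fun k => ?_⟩
    refine ⟨Finset.image
      (fun p : List.Vector Bool k × List.Vector Bool k =>
        piece k p.1.toList p.2.toList) Finset.univ, ?_, ?_, ?_⟩
    · -- cover
      intro x hx
      have h0 : x 0 ∈ cantorStage k := Set.mem_iInter.mp hx.1 k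
      have h1 : x 1 ∈ cantorStage k := Set.mem_iInter.mp hx.2 k
      rw [cantorStage, Set.mem_iUnion₂] at h0 h1
      obtain ⟨w, hw, hxw⟩ := h0
      obtain ⟨u, hu, hxu⟩ := h1
      rw [Set.mem_iUnion₂]
      refine ⟨piece k w u, ?_, ⟨⟨hxw, hxu⟩, hx⟩⟩
      rw [Finset.mem_image]
      exact ⟨(⟨w, hw⟩, ⟨u, hu⟩), Finset.mem_univ _, rfl⟩
    · -- diameter
      intro A hA
      rw [Finset.mem_image] at hA
      obtain ⟨p, _, rfl⟩ := hA
      apply lt_of_le_of_lt (piece_diam k p.1.toList p.2.toList)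
      rw [ENNReal.ofReal_lt_ofReal_iff (by positivity)]
      have h2 : ((2:ℝ)^k)⁻¹ = (1/2)^k := by
        rw [div_pow, one_pow, one_div]
      rw [h2]
      have hp : (0:ℝ) < (1/2:ℝ)^k := by positivity
      have hs : Real.sqrt 2 < 2 := by
        nlinarith [Real.sq_sqrt (by norm_num : (2:ℝ) ≥ 0), Real.sqrt_nonneg 2]
      nlinarith
    · -- separation
      intro A hA B hB hAB
      rw [Finset.mem_image] at hA hB
      obtain ⟨p, _, rfl⟩ := hA
      obtain ⟨q, _, rfl⟩ := hB
      cases k with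
      | zero =>
        exfalso
        apply hAB
        have e1 : p.1.toList = q.1.toList := by
          rw [List.length_eq_zero_iff.mp p.1.toList_length, List.length_eq_zero_iff.mp q.1.toList_length]
        have e2 : p.2.toList = q.2.toList := by
          rw [List.length_eq_zero_iff.mp p.2.toList_length, List.length_eq_zero_iff.mp q.2.toList_length]
        rw [e1, e2]
      | succ m =>
        have hlt : ((1:ℝ)/2) * (1/4)^(m+1) < gap m := gap_gt m
        calc ENNReal.ofReal ((1/2) * (1/4)^(m+1))
            < ENNReal.ofReal (gap m) := by
              rw [ENNReal.ofReal_lt_ofReal_iff (gap_pos m)]; exact hlt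
          _ ≤ ⨅ x ∈ piece (m+1) p.1.toList p.2.toList,
                EMetric.infEdist x (piece (m+1) q.1.toList q.2.toList) := by
              apply le_iInf₂
              intro x hx
              refine Metric.le_infEDist.mpr ?_
              intro y hy
              rw [edist_dist]
              apply ENNReal.ofReal_le_ofReal
              have := piece_sep p.1.toList_length p.2.toList_length
                q.1.toList_length q.2.toList_length hAB hx hy
              simpa using this
  · -- second part
    intro k
    refine ⟨fun w u _ _ => piece_diam k w u, ?_⟩
    intro hk w u w' u' hw hu hw' hu' hne x hx y hy
    obtain ⟨m, rfl⟩ : ∃ m, k = m + 1 := ⟨k - 1, by omega⟩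
    have hsep : gap m ≤ dist x y := by
      have := piece_sep hw hu hw' hu' hne hx hy
      simpa using this
    have hlt : ((1:ℝ)/2) * (1/4)^(m+1) < gap m := gap_gt m
    have he : ((4:ℝ)^(m+1))⁻¹ = (1/4)^(m+1) := by
      rw [div_pow, one_pow, one_div]
    rw [he]
    have hp : (0:ℝ) < (1/4:ℝ)^(m+1) := by positivity
    linarith

end
end
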